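/- There is no perfect coloring of H with parameter matrix [[0,3],[2,1]]; that is, no map φ : G → Fin 2 has the property that every vertex colored 0 has all 3 of its neighbors colored 1, while every vertex colored 1 has exactly 2 neighbors colored 0 and 1 neighbor colored 1. -/

import Mathlib

namespace HexGrid

/-- Relations of the hexagonal grid group: x² = y² = z² = (x·y·z)² = 1. -/
def hexRels : Set (FreeGroup (Fin 3)) :=
  {FreeGroup.of 0 * FreeGroup.of 0,
   FreeGroup.of 1 * FreeGroup.of 1,
   FreeGroup.of 2 * FreeGroup.of 2,
   FreeGroup.of 0 * FreeGroup.of 1 * FreeGroup.of 2 *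
     (FreeGroup.of 0 * FreeGroup.of 1 * FreeGroup.of 2)}

/-- The group `G = ⟨x, y, z ∣ x² = y² = z² = (x·y·z)² = 1⟩`. -/
abbrev G := PresentedGroup hexRels

/-- The generators of `G`. -/
def gen (i : Fin 3) : G := PresentedGroup.of i

def x : G := gen 0
def y : G := gen 1
def z : G := gen 2

lemma gen_mul_self (i : Fin 3) : gen i * gen i = 1 := by
  have h : FreeGroup.of i * FreeGroup.of i ∈ Subgroup.normalClosure hexRels :=
    Subgroup.subset_normalClosure (by fin_cases i <;> simp [hexRels])
  exact (QuotientGroup.eq_one_iff _).mpr h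

/-- The infinite hexagonal grid `H`: the Cayley graph of `G` with respect to `{x, y, z}`;
`u` and `v` are adjacent iff `v ∈ {u·x, u·y, u·z}`. -/
def H : SimpleGraph G where
  Adj u v := u ≠ v ∧ ∃ i : Fin 3, v = u * gen i
  symm := by
    refine ⟨?_⟩
    rintro u v ⟨hne, i, rfl⟩
    exact ⟨hne.symm, i, by rw [mul_assoc, gen_mul_self, mul_one]⟩
  loopless := by refine ⟨?_⟩; rintro u ⟨hne, -⟩; exact hne rfl

/-- `φ` is a perfect coloring of `H` with parameter matrix `A`: for every vertex `u` and
every color `j`, the number of neighbors of `u` in `H` colored `j` equals `A (φ u) j`. -/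
def IsPerfectColoring {k : ℕ} (φ : G → Fin k) (A : Matrix (Fin k) (Fin k) ℕ) : Prop :=
  ∀ u : G, ∀ j : Fin k, Set.ncard {v : G | H.Adj u v ∧ φ v = j} = A (φ u) j

/-- A matrix is tridiagonal if its entries vanish whenever the indices differ by more
than one. -/
def IsTridiagonal {k : ℕ} (A : Matrix (Fin k) (Fin k) ℕ) : Prop :=
  ∀ i j : Fin k, ((i : ℕ) + 1 < (j : ℕ) ∨ (j : ℕ) + 1 < (i : ℕ)) → A i j = 0

/-- Two colorings are equivalent if one is obtained from the other by composing with a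
graph automorphism of `H`. -/
def EquivColoring {k : ℕ} (φ ψ : G → Fin k) : Prop :=
  ∃ g : H ≃g H, ψ = fun v => φ (g v)

/-! ### Auxiliary material for `no_coloring_03_21` -/

section Aux

lemma ncard_triple {α : Type*} (a b c : α) (p : α → Prop) [DecidablePred p]
    (hab : a ≠ b) (hac : a ≠ c) (hbc : b ≠ c) :
    Set.ncard {v | (v = a ∨ v = b ∨ v = c) ∧ p v} =
      (if p a then 1 else 0) + (if p b then 1 else 0) + (if p c then 1 else 0) := by
  classical
  have h : {v | (v = a ∨ v = b ∨ v = c) ∧ p v} = ↑(({a, b, c} : Finset α).filter p) := by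
    ext v
    simp only [Set.mem_setOf_eq, Finset.coe_filter, Finset.mem_insert, Finset.mem_singleton]
  rw [h, Set.ncard_coe_finset]
  rw [Finset.filter_insert, Finset.filter_insert, Finset.filter_singleton]
  split_ifs <;>
    simp_all [Finset.card_insert_of_notMem, hab, hac, hbc]

/-- The map to the abelianization `(ℤ/2)³`. -/
def abf (i : Fin 3) : Multiplicative (Fin 3 → ZMod 2) :=
  Multiplicative.ofAdd (Pi.single i 1)

lemma absupp : ∀ r ∈ hexRels, FreeGroup.lift abf r = 1 := by
  intro r hr
  rcases hr with h | h | h | h <;> subst h <;>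
    simp only [map_mul, FreeGroup.lift_apply_of] <;> decide

/-- The homomorphism from `G` to its abelianization `(ℤ/2)³`. -/
def abHom : G →* Multiplicative (Fin 3 → ZMod 2) := PresentedGroup.toGroup absupp

lemma abHom_gen (i : Fin 3) : abHom (gen i) = abf i := PresentedGroup.toGroup.of absupp

lemma gen_ne_one (i : Fin 3) : gen i ≠ 1 := by
  intro h
  have := congrArg abHom h
  rw [abHom_gen, map_one] at this
  fin_cases i <;> exact absurd this (by decide)

lemma gen_ne_gen {i j : Fin 3} (h : i ≠ j) : gen i ≠ gen j := by
  intro hg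
  have := congrArg abHom hg
  rw [abHom_gen, abHom_gen] at this
  fin_cases i <;> fin_cases j <;>
    first | exact absurd rfl h | exact absurd this (by decide)

lemma hexagon : x * y * z * (x * y * z) = 1 := by
  have h : FreeGroup.of 0 * FreeGroup.of 1 * FreeGroup.of 2 *
      (FreeGroup.of 0 * FreeGroup.of 1 * FreeGroup.of 2) ∈ Subgroup.normalClosure hexRels :=
    Subgroup.subset_normalClosure (by simp [hexRels])
  exact (QuotientGroup.eq_one_iff _).mpr h

lemma xx : x * x = 1 := gen_mul_self 0
lemma yy : y * y = 1 := gen_mul_self 1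
lemma zz : z * z = 1 := gen_mul_self 2

lemma gen_inv (i : Fin 3) : (gen i)⁻¹ = gen i :=
  inv_eq_of_mul_eq_one_right (gen_mul_self i)

lemma xyz_inv : (x * (y * z))⁻¹ = x * (y * z) := by
  have h : x * (y * z) * (x * (y * z)) = 1 := by
    have := hexagon; rwa [mul_assoc x y z] at this
  rw [inv_eq_of_mul_eq_one_right h]

lemma hzyx : z * (y * x) = x * (y * z) := by
  have : (x * (y * z))⁻¹ = z * (y * x) := by
    rw [mul_inv_rev, mul_inv_rev, show (x:G)⁻¹ = x from gen_inv 0,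
      show (y:G)⁻¹ = y from gen_inv 1, show (z:G)⁻¹ = z from gen_inv 2, mul_assoc]
  rw [← this, xyz_inv]

lemma hzxy : z * (x * y) = y * (x * z) := by
  have h1 : z * (x * (y * z)) * z = z * (x * y) := by
    rw [show x * (y * z) = x * y * z by group, show z * (x*y*z) * z = z*(x*y)*(z*z) by group,
      show z*z = gen 2 * gen 2 from rfl, gen_mul_self, mul_one]
  have h2 : (z * (x * y)) * (z * (x * y)) = 1 := by
    rw [← h1]
    have hz : z * z = 1 := gen_mul_self 2
    calc z * (x * (y * z)) * z * (z * (x * (y * z)) * z)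
        = z * ((x * (y * z)) * ((z * z) * (x * (y * z)))) * z := by group
      _ = z * ((x * (y * z)) * (x * (y * z))) * z := by rw [hz, one_mul]
      _ = z * z := by rw [← mul_assoc x y z, hexagon, mul_one]
      _ = 1 := hz
  have h3 : (z * (x * y))⁻¹ = y * (x * z) := by
    rw [mul_inv_rev, mul_inv_rev]
    rw [show (x:G)⁻¹ = x from gen_inv 0, show (y:G)⁻¹ = y from gen_inv 1,
      show (z:G)⁻¹ = z from gen_inv 2, mul_assoc]
  rw [← h3, inv_eq_of_mul_eq_one_right h2]

lemma hyzx : y * (z * x) = x * (z * y) := by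
  have h1 : x * (x * (y * z)) * x = y * (z * x) := by
    have hx : x * x = 1 := gen_mul_self 0
    calc x * (x * (y * z)) * x = (x * x) * (y * (z * x)) := by group
      _ = y * (z * x) := by rw [hx, one_mul]
  have h2 : (y * (z * x)) * (y * (z * x)) = 1 := by
    rw [← h1]
    have hx : x * x = 1 := gen_mul_self 0
    calc x * (x * (y * z)) * x * (x * (x * (y * z)) * x)
        = x * ((x * (y * z)) * ((x * x) * (x * (y * z)))) * x := by group
      _ = x * ((x * (y * z)) * (x * (y * z))) * x := by rw [hx, one_mul]
      _ = x * x := by rw [← mul_assoc x y z, hexagon, mul_one]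
      _ = 1 := hx
  have h3 : (y * (z * x))⁻¹ = x * (z * y) := by
    rw [mul_inv_rev, mul_inv_rev]
    rw [show (x:G)⁻¹ = x from gen_inv 0, show (y:G)⁻¹ = y from gen_inv 1,
      show (z:G)⁻¹ = z from gen_inv 2, mul_assoc]
  rw [← h3, inv_eq_of_mul_eq_one_right h2]

lemma mul_gen_ne (u : G) {i j : Fin 3} (h : i ≠ j) : u * gen i ≠ u * gen j :=
  fun hg => gen_ne_gen h (mul_left_cancel hg)

/-- The key local constraint: around any vertex, the neighbor colors (as 0/1 values)
together with twice the vertex's own color sum to 3. -/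
lemma key (φ : G → Fin 2) (hφ : IsPerfectColoring φ !![0,3;2,1]) (u : G) :
    (φ (u*x)).val + (φ (u*y)).val + (φ (u*z)).val + 2 * (φ u).val = 3 := by
  classical
  have hd1 : u*x ≠ u*y := mul_gen_ne u (by decide)
  have hd2 : u*x ≠ u*z := mul_gen_ne u (by decide)
  have hd3 : u*y ≠ u*z := mul_gen_ne u (by decide)
  have hset : {v : G | H.Adj u v ∧ φ v = 1} =
      {v | (v = u*x ∨ v = u*y ∨ v = u*z) ∧ φ v = 1} := by
    ext v
    constructor
    · rintro ⟨⟨hne, i, rfl⟩, hc⟩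
      refine ⟨?_, hc⟩
      fin_cases i
      · exact Or.inl rfl
      · exact Or.inr (Or.inl rfl)
      · exact Or.inr (Or.inr rfl)
    · rintro ⟨h, hc⟩
      have hne : ∀ i : Fin 3, u ≠ u * gen i := by
        intro i hg
        exact gen_ne_one i (by
          have := hg.symm
          rwa [mul_eq_left] at this)
      rcases h with rfl | rfl | rfl
      · exact ⟨⟨hne 0, 0, rfl⟩, hc⟩
      · exact ⟨⟨hne 1, 1, rfl⟩, hc⟩
      · exact ⟨⟨hne 2, 2, rfl⟩, hc⟩
  have h1 := hφ u 1
  rw [hset, ncard_triple _ _ _ _ hd1 hd2 hd3] at h1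
  have hval : ∀ t : Fin 2, (if t = 1 then (1:ℕ) else 0) = t.val := by decide
  simp only [hval] at h1
  have h2 : ∀ t : Fin 2, t = 0 ∨ t = 1 := by decide
  rcases h2 (φ u) with h0 | h0 <;> rw [h0] at h1 ⊢
  · have hA : !![0,3;2,1] (0 : Fin 2) 1 = 3 := by decide
    rw [hA] at h1
    simp only [Fin.val_zero]
    omega
  · have hA : !![0,3;2,1] (1 : Fin 2) 1 = 1 := by decide
    rw [hA] at h1
    simp only [Fin.val_one]
    omega

/-- Some vertex is colored `0`. -/
lemma exists_zero (φ : G → Fin 2) (hφ : IsPerfectColoring φ !![0,3;2,1]) :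
    ∃ u : G, φ u = 0 := by
  have h2 : ∀ t : Fin 2, t = 0 ∨ t = 1 := by decide
  rcases h2 (φ 1) with h | h
  · exact ⟨1, h⟩
  · have h0 := hφ 1 0
    rw [h] at h0
    have hA : !![0,3;2,1] (1 : Fin 2) 0 = 2 := by decide
    rw [hA] at h0
    have hne : {v : G | H.Adj 1 v ∧ φ v = 0}.Nonempty :=
      Set.nonempty_of_ncard_ne_zero (by omega)
    obtain ⟨v, -, hv⟩ := hne
    exact ⟨v, hv⟩

end Aux

/-- The array `[03-21]` is infeasible: there is no perfect coloring of `H` with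
parameter matrix `[[0,3],[2,1]]`. -/
theorem no_coloring_03_21 : ¬ ∃ φ : G → Fin 2, IsPerfectColoring φ !![0,3;2,1] := by
  rintro ⟨φ, hφ⟩
  obtain ⟨u0, hu0⟩ := exists_zero φ hφ
  have k0 := key φ hφ (u0*x)
  have k1 := key φ hφ (u0*z)
  have k2 := key φ hφ (u0*y)
  have k3 := key φ hφ (u0*(x*y))
  have k4 := key φ hφ (u0*(z*y))
  have k5 := key φ hφ (u0*(x*z))
  have k6 := key φ hφ (u0*(z*x))
  have k7 := key φ hφ (u0*(y*z))
  have k8 := key φ hφ (u0*(y*x))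
  simp only [mul_assoc] at k0 k1 k2 k3 k4 k5 k6 k7 k8
  simp only [xx, yy, zz, hzyx, hzxy, hyzx, mul_one] at k0 k1 k2 k3 k4 k5 k6 k7 k8
  have b1 : (φ (u0*x)).val ≤ 1 := Fin.is_le _
  have b2 : (φ (u0*y)).val ≤ 1 := Fin.is_le _
  have b3 : (φ (u0*z)).val ≤ 1 := Fin.is_le _
  have b4 : (φ (u0*(x*y))).val ≤ 1 := Fin.is_le _
  have b5 : (φ (u0*(z*y))).val ≤ 1 := Fin.is_le _
  have b6 : (φ (u0*(x*z))).val ≤ 1 := Fin.is_le _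
  have b7 : (φ (u0*(z*x))).val ≤ 1 := Fin.is_le _
  have b8 : (φ (u0*(y*z))).val ≤ 1 := Fin.is_le _
  have b9 : (φ (u0*(y*x))).val ≤ 1 := Fin.is_le _
  have b10 : (φ (u0*(x*(y*x)))).val ≤ 1 := Fin.is_le _
  have b11 : (φ (u0*(x*(y*z)))).val ≤ 1 := Fin.is_le _
  have b12 : (φ (u0*(z*(y*z)))).val ≤ 1 := Fin.is_le _
  have b13 : (φ (u0*(x*(z*x)))).val ≤ 1 := Fin.is_le _
  have b14 : (φ (u0*(x*(z*y)))).val ≤ 1 := Fin.is_le _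
  have b15 : (φ (u0*(z*(x*z)))).val ≤ 1 := Fin.is_le _
  have b16 : (φ (u0*(y*(x*z)))).val ≤ 1 := Fin.is_le _
  have b17 : (φ (u0*(y*(z*y)))).val ≤ 1 := Fin.is_le _
  have b18 : (φ (u0*(y*(x*y)))).val ≤ 1 := Fin.is_le _
  have hz0 : (φ u0).val = 0 := by rw [hu0]; rfl
  have s1 : (φ (u0*(y*z))).val = 0 ∨ (φ (u0*(y*z))).val = 1 := by omega
  have s2 : (φ (u0*(z*y))).val = 0 ∨ (φ (u0*(z*y))).val = 1 := by omega
  have s3 : (φ (u0*(x*z))).val = 0 ∨ (φ (u0*(x*z))).val = 1 := by omega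
  have s4 : (φ (u0*(x*y))).val = 0 ∨ (φ (u0*(x*y))).val = 1 := by omega
  rcases s1 with h1 | h1 <;> rcases s2 with h2 | h2 <;> rcases s3 with h3 | h3 <;>
    rcases s4 with h4 | h4 <;> omega


end HexGrid
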